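/- Let x_1, …, x_T ∈ ℝ^N (T ≥ 1) with positive definite sample covariance C := (1/T) Σ_t x_t x_tᵀ, and let w_1, …, w_K ∈ ℝ^N be unit vectors. For families Y = (y_1, …, y_T) in ℝ^N and g ∈ ℝ^K, define ℓ(Y, g) := (1/T) Σ_{t=1}^T ‖x_t − y_t‖² + Σ_{i=1}^K g_i [ (1/T) Σ_{t=1}^T (w_iᵀ y_t)² − 1 ]. Suppose g* ∈ ℝ^K satisfies I_N + Σ_{i=1}^K g*_i w_i w_iᵀ = C^{1/2}, and set y*_t := C^{-1/2} x_t. Then for all g ∈ ℝ^K and all families Y: ℓ(Y*, g) ≤ ℓ(Y*, g*) ≤ ℓ(Y, g*), i.e., (Y*, g*) is a saddle point of ℓ. -/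

import Mathlib

open Matrix BigOperators

noncomputable section

lemma sum_mulVec' {N K : ℕ} (M : Fin K → Matrix (Fin N) (Fin N) ℝ) (y : Fin N → ℝ) :
    (∑ i, M i) *ᵥ y = ∑ i, (M i) *ᵥ y := by
  ext j
  simp only [mulVec, dotProduct, Matrix.sum_apply, Finset.sum_apply, Finset.sum_mul]
  exact Finset.sum_comm

lemma dotProduct_sum' {N K : ℕ} (y : Fin N → ℝ) (v : Fin K → Fin N → ℝ) :
    y ⬝ᵥ (∑ i, v i) = ∑ i, y ⬝ᵥ v i := by
  simp only [dotProduct, Finset.sum_apply, Finset.mul_sum]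
  exact Finset.sum_comm

lemma vecMulVec_mulVec' {N : ℕ} (a b v : Fin N → ℝ) :
    (vecMulVec a b) *ᵥ v = (b ⬝ᵥ v) • a := by
  ext i
  simp [mulVec, vecMulVec_apply, dotProduct, Finset.mul_sum, mul_comm, mul_assoc, mul_left_comm]

lemma quad_form_sum {N K : ℕ} (g : Fin K → ℝ) (w : Fin K → Fin N → ℝ) (y : Fin N → ℝ) :
    y ⬝ᵥ (∑ i, g i • vecMulVec (w i) (w i)) *ᵥ y = ∑ i, g i * (w i ⬝ᵥ y) ^ 2 := by
  rw [sum_mulVec', dotProduct_sum']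
  refine Finset.sum_congr rfl fun i _ => ?_
  rw [smul_mulVec, dotProduct_smul, vecMulVec_mulVec', dotProduct_smul]
  rw [dotProduct_comm y (w i)]
  simp [smul_eq_mul]
  ring_nf
  tauto

/-- The Lagrangian `ℓ(Y, g)` of the marginal-variance–constrained whitening objective
(Eq. 6 of the paper): mean-squared error plus gain-weighted marginal variance constraints. -/
def lagrangian {N K T : ℕ} (x : Fin T → (Fin N → ℝ)) (w : Fin K → (Fin N → ℝ))
    (Y : Fin T → (Fin N → ℝ)) (g : Fin K → ℝ) : ℝ :=
  (T : ℝ)⁻¹ * ∑ t, (x t - Y t) ⬝ᵥ (x t - Y t) +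
    ∑ i, g i * ((T : ℝ)⁻¹ * (∑ t, (w i ⬝ᵥ Y t) ^ 2) - 1)

/-- The positive semidefinite square root `Matrix.PosSemidef.sqrt`, as defined in Mathlib
(December 2024); it was removed from Mathlib since then. -/
def Matrix.PosSemidef.sqrt {n : Type*} [Fintype n] [DecidableEq n]
    {A : Matrix n n ℝ} (hA : A.PosSemidef) : Matrix n n ℝ :=
  (hA.1.eigenvectorUnitary : Matrix n n ℝ) *
    diagonal (fun i => Real.sqrt (hA.1.eigenvalues i)) *
    (star hA.1.eigenvectorUnitary : Matrix n n ℝ)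

lemma posSemidef_sqrt' {n : Type*} [Fintype n] [DecidableEq n]
    {A : Matrix n n ℝ} (hA : A.PosSemidef) : hA.sqrt.PosSemidef := by
  unfold Matrix.PosSemidef.sqrt
  have := (PosSemidef.diagonal (d := fun i => Real.sqrt (hA.1.eigenvalues i))
    (fun i => Real.sqrt_nonneg _)).mul_mul_conjTranspose_same
    (hA.1.eigenvectorUnitary : Matrix n n ℝ)
  simpa [Unitary.coe_star, Matrix.star_eq_conjTranspose] using this

lemma sqrt_mul_self' {n : Type*} [Fintype n] [DecidableEq n]
    {A : Matrix n n ℝ} (hA : A.PosSemidef) : hA.sqrt * hA.sqrt = A := by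
  unfold Matrix.PosSemidef.sqrt
  conv_rhs => rw [hA.1.spectral_theorem, Unitary.conjStarAlgAut_apply]
  have hU : (star hA.1.eigenvectorUnitary : Matrix n n ℝ) * (hA.1.eigenvectorUnitary : Matrix n n ℝ) = 1 :=
    Unitary.coe_star_mul_self _
  have hD : diagonal (fun i => Real.sqrt (hA.1.eigenvalues i)) *
      diagonal (fun i => Real.sqrt (hA.1.eigenvalues i)) = diagonal (RCLike.ofReal ∘ hA.1.eigenvalues) := by
    rw [diagonal_mul_diagonal]
    congr 1; funext i
    simp [Real.mul_self_sqrt (hA.eigenvalues_nonneg i)]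
  calc _ = (hA.1.eigenvectorUnitary : Matrix n n ℝ) * (diagonal (fun i => Real.sqrt (hA.1.eigenvalues i)) *
      ((star hA.1.eigenvectorUnitary : Matrix n n ℝ) * (hA.1.eigenvectorUnitary : Matrix n n ℝ)) *
      diagonal (fun i => Real.sqrt (hA.1.eigenvalues i))) * (star hA.1.eigenvectorUnitary : Matrix n n ℝ) := by
        simp only [Matrix.mul_assoc]
    _ = _ := by rw [hU, Matrix.mul_one, hD]

/-- Saddle point property (Appendix E): if `g*` satisfies
`I_N + Σᵢ g*ᵢ wᵢ wᵢᵀ = C^{1/2}` and `y*ₜ = C^{-1/2} xₜ`, then `(Y*, g*)` is a saddle point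
of the Lagrangian: `ℓ(Y*, g) ≤ ℓ(Y*, g*) ≤ ℓ(Y, g*)` for all `g` and all `Y`. -/
theorem lagrangian_saddle_point
    (N K T : ℕ) (hT : 1 ≤ T)
    (x : Fin T → (Fin N → ℝ))
    (hC : Matrix.PosDef ((T : ℝ)⁻¹ • ∑ t, vecMulVec (x t) (x t)))
    (w : Fin K → (Fin N → ℝ)) (hunit : ∀ i, w i ⬝ᵥ w i = 1)
    (gstar : Fin K → ℝ)
    (hgstar : (1 : Matrix (Fin N) (Fin N) ℝ) + ∑ i, gstar i • vecMulVec (w i) (w i) =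
      hC.posSemidef.sqrt)
    (ystar : Fin T → (Fin N → ℝ))
    (hystar : ∀ t, ystar t = (hC.posSemidef.sqrt)⁻¹.mulVec (x t)) :
    ∀ (g : Fin K → ℝ) (Y : Fin T → (Fin N → ℝ)),
      lagrangian x w ystar g ≤ lagrangian x w ystar gstar ∧
      lagrangian x w ystar gstar ≤ lagrangian x w Y gstar := by
  intro g Y
  have hTpos : (0:ℝ) < T := by exact_mod_cast hT
  set C : Matrix (Fin N) (Fin N) ℝ := (T : ℝ)⁻¹ • ∑ t, vecMulVec (x t) (x t) with hCdef
  set S := hC.posSemidef.sqrt with hSdef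
  have hSpsd : S.PosSemidef := posSemidef_sqrt' hC.posSemidef
  have hSherm : S.IsHermitian := hSpsd.1
  have hSt : Sᵀ = S := by
    conv_rhs => rw [← hSherm.eq]
    ext i j
    simp [conjTranspose_apply]
  have hSS : S * S = C := sqrt_mul_self' hC.posSemidef
  have hdet : IsUnit S.det := by
    have h1 : S.det * S.det = C.det := by rw [← det_mul, hSS]
    have h2 : (0:ℝ) < C.det := hC.det_pos
    have : S.det ≠ 0 := by
      intro h; rw [h, mul_zero] at h1; exact h2.ne' h1.symm
    exact this.isUnit
  have hinvS : S⁻¹ * S = 1 := nonsing_inv_mul _ hdet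
  have hSinv' : S * S⁻¹ = 1 := mul_nonsing_inv _ hdet
  have hsym : ∀ a b : Fin N → ℝ, a ⬝ᵥ S *ᵥ b = b ⬝ᵥ S *ᵥ a := by
    intro a b
    rw [dotProduct_mulVec, ← mulVec_transpose, hSt, dotProduct_comm]
  have hx : ∀ t, S *ᵥ ystar t = x t := by
    intro t
    rw [hystar t, mulVec_mulVec, hSinv', one_mulVec]
  -- the constraint vanishes at ystar
  have hzero : ∀ i, (T : ℝ)⁻¹ * (∑ t, (w i ⬝ᵥ ystar t) ^ 2) - 1 = 0 := by
    intro i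
    set v : Fin N → ℝ := S⁻¹ *ᵥ (w i) with hv
    have hSinvT : (S⁻¹)ᵀ = S⁻¹ := by rw [transpose_nonsing_inv, hSt]
    have hwy : ∀ t, w i ⬝ᵥ ystar t = v ⬝ᵥ x t := by
      intro t
      rw [hystar t, dotProduct_mulVec, ← mulVec_transpose, hSinvT]
    have hq : v ⬝ᵥ C *ᵥ v = (T : ℝ)⁻¹ * ∑ t, (v ⬝ᵥ x t) ^ 2 := by
      rw [hCdef, smul_mulVec, dotProduct_smul, smul_eq_mul, sum_mulVec', dotProduct_sum']
      congr 1
      refine Finset.sum_congr rfl fun t _ => ?_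
      rw [vecMulVec_mulVec', dotProduct_smul, smul_eq_mul, dotProduct_comm (x t) v]
      ring
    have hSv : S *ᵥ v = w i := by
      rw [hv, mulVec_mulVec, hSinv', one_mulVec]
    have hCv : v ⬝ᵥ C *ᵥ v = 1 := by
      rw [← hSS, ← mulVec_mulVec, hSv, hsym, hSv, hunit i]
    have : (T : ℝ)⁻¹ * ∑ t, (w i ⬝ᵥ ystar t) ^ 2 = 1 := by
      simp_rw [hwy]
      rw [← hq, hCv]
    rw [this]; ring
  constructor
  · -- both sides equal the first term
    unfold lagrangian
    simp only [hzero, mul_zero, Finset.sum_const_zero, add_zero, le_refl]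
  · -- part 2
    have hM : (∑ i, gstar i • vecMulVec (w i) (w i)) = S - 1 := by
      rw [eq_sub_iff_add_eq, add_comm, hgstar]
    have lag_expand : ∀ Z : Fin T → (Fin N → ℝ),
        lagrangian x w Z gstar =
          (T : ℝ)⁻¹ * ∑ t, (x t ⬝ᵥ x t - 2*(x t ⬝ᵥ Z t) + Z t ⬝ᵥ S *ᵥ Z t) - ∑ i, gstar i := by
      intro Z
      unfold lagrangian
      have hquad : ∀ t, ∑ i, gstar i * (w i ⬝ᵥ Z t) ^ 2
          = Z t ⬝ᵥ S *ᵥ Z t - Z t ⬝ᵥ Z t := by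
        intro t
        rw [← quad_form_sum, hM, sub_mulVec, dotProduct_sub, one_mulVec]
      have hstep : ∑ i, gstar i * ((T : ℝ)⁻¹ * (∑ t, (w i ⬝ᵥ Z t) ^ 2) - 1)
          = (T : ℝ)⁻¹ * ∑ t, (Z t ⬝ᵥ S *ᵥ Z t - Z t ⬝ᵥ Z t) - ∑ i, gstar i := by
        have h1 : ∑ t, (Z t ⬝ᵥ S *ᵥ Z t - Z t ⬝ᵥ Z t)
            = ∑ t, ∑ i, gstar i * (w i ⬝ᵥ Z t) ^ 2 := by
          exact Finset.sum_congr rfl fun t _ => (hquad t).symm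
        rw [h1, Finset.sum_comm]
        rw [Finset.mul_sum, ← Finset.sum_sub_distrib]
        refine Finset.sum_congr rfl fun i _ => ?_
        rw [← Finset.mul_sum]
        ring
      rw [hstep]
      have hsq : ∀ t, (x t - Z t) ⬝ᵥ (x t - Z t)
          = x t ⬝ᵥ x t - 2*(x t ⬝ᵥ Z t) + Z t ⬝ᵥ Z t := by
        intro t
        rw [dotProduct_sub, sub_dotProduct, sub_dotProduct, dotProduct_comm (Z t) (x t)]
        ring
      simp_rw [hsq]
      rw [← add_sub_assoc, ← mul_add, ← Finset.sum_add_distrib]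
      congr 2
      refine Finset.sum_congr rfl fun t _ => ?_
      ring
    rw [lag_expand ystar, lag_expand Y]
    have key : ∀ t, x t ⬝ᵥ x t - 2*(x t ⬝ᵥ ystar t) + ystar t ⬝ᵥ S *ᵥ ystar t
        ≤ x t ⬝ᵥ x t - 2*(x t ⬝ᵥ Y t) + Y t ⬝ᵥ S *ᵥ Y t := by
      intro t
      have h0 : 0 ≤ (Y t - ystar t) ⬝ᵥ S *ᵥ (Y t - ystar t) := by
        have := hSpsd.dotProduct_mulVec_nonneg (Y t - ystar t)
        simpa using this
      have hexp : (Y t - ystar t) ⬝ᵥ S *ᵥ (Y t - ystar t)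
          = Y t ⬝ᵥ S *ᵥ Y t - 2*(ystar t ⬝ᵥ S *ᵥ Y t) + ystar t ⬝ᵥ S *ᵥ ystar t := by
        rw [mulVec_sub, dotProduct_sub, sub_dotProduct, sub_dotProduct,
          hsym (Y t) (ystar t)]
        ring
      have hxy : x t ⬝ᵥ Y t = ystar t ⬝ᵥ S *ᵥ Y t := by
        rw [← hx t, hsym (ystar t) (Y t), dotProduct_comm]
      have hxy' : x t ⬝ᵥ ystar t = ystar t ⬝ᵥ S *ᵥ ystar t := by
        rw [← hx t, dotProduct_comm]
      rw [hexp] at h0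
      rw [hxy, hxy']
      linarith
    have hsum : ∑ t, (x t ⬝ᵥ x t - 2*(x t ⬝ᵥ ystar t) + ystar t ⬝ᵥ S *ᵥ ystar t)
        ≤ ∑ t, (x t ⬝ᵥ x t - 2*(x t ⬝ᵥ Y t) + Y t ⬝ᵥ S *ᵥ Y t) :=
      Finset.sum_le_sum fun t _ => key t
    have hTinv : (0:ℝ) ≤ (T:ℝ)⁻¹ := by positivity
    nlinarith [mul_le_mul_of_nonneg_left hsum hTinv]
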